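/- Let I ⊊ S be a monomial ideal and let x_ℓ be a variable. If 𝔄 is a Stanley decomposition of S/(I + ⟨x_ℓ⟩) and 𝔅 is a Stanley decomposition of S/(I : x_ℓ), then 𝔄 ∪ {(x_ℓ·x^v, σ) : (x^v, σ) ∈ 𝔅} is a Stanley decomposition of S/I. -/

import Mathlib

open MvPolynomial

/-- `I` is a monomial ideal: it is generated by a set of monomials `x^u`. -/
def IsMonomialIdeal {k : Type} [Field k] {n : ℕ} (I : Ideal (MvPolynomial (Fin n) k)) : Prop :=
  ∃ G : Set (Fin n →₀ ℕ), I = Ideal.span ((fun u => (monomial u (1 : k))) '' G)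

/-- The set of exponent vectors of monomials in the pair `(x^u, σ)`. -/
def stanleyPairSet {n : ℕ} (u : Fin n →₀ ℕ) (σ : Finset (Fin n)) : Set (Fin n →₀ ℕ) :=
  {w | ∃ v : Fin n →₀ ℕ, (∀ i, v i ≠ 0 → i ∈ σ) ∧ w = u + v}

/-- A Stanley decomposition of `S/I`. -/
def IsStanleyDecomp {k : Type} [Field k] {n : ℕ} (I : Ideal (MvPolynomial (Fin n) k))
    (𝔖 : Finset ((Fin n →₀ ℕ) × Finset (Fin n))) : Prop :=
  (∀ p ∈ 𝔖, ∀ q ∈ 𝔖, p ≠ q → Disjoint (stanleyPairSet p.1 p.2) (stanleyPairSet q.1 q.2)) ∧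
  (⋃ p ∈ (𝔖 : Set ((Fin n →₀ ℕ) × Finset (Fin n))), stanleyPairSet p.1 p.2)
      = {w | monomial w (1 : k) ∉ I}

section helpers
variable {k : Type} [Field k] {n : ℕ}

lemma exists_div_of_mem_span {G : Set (Fin n →₀ ℕ)}
    {p : MvPolynomial (Fin n) k} (hp : p ∈ Ideal.span ((fun u => monomial u (1:k)) '' G))
    {w : Fin n →₀ ℕ} (hw : coeff w p ≠ 0) : ∃ u ∈ G, u ≤ w := by
  induction hp using Submodule.span_induction generalizing w with
  | mem x h =>
    obtain ⟨u, hu, rfl⟩ := h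
    rcases eq_or_ne w u with rfl | hne
    · exact ⟨w, hu, le_refl _⟩
    · simp only [coeff_monomial, if_neg (Ne.symm hne)] at hw
      exact absurd rfl hw
  | zero => simp at hw
  | add x y hx hy ihx ihy =>
    rw [coeff_add] at hw
    rcases (show coeff w x ≠ 0 ∨ coeff w y ≠ 0 by
      by_contra h; push_neg at h; simp [h.1, h.2] at hw) with h | h
    · exact ihx h
    · exact ihy h
  | smul a x hx ih =>
    rw [smul_eq_mul, coeff_mul] at hw
    obtain ⟨⟨w1, w2⟩, hmem, hne⟩ := Finset.exists_ne_zero_of_sum_ne_zero hw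
    obtain ⟨u, hu, hle⟩ := ih (w := w2) (fun h => hne (by simp [h]))
    refine ⟨u, hu, hle.trans ?_⟩
    rw [Finset.HasAntidiagonal.mem_antidiagonal] at hmem
    exact hmem ▸ le_add_self

lemma monomial_mem_span_iff (G : Set (Fin n →₀ ℕ)) (w : Fin n →₀ ℕ) :
    (monomial w (1:k)) ∈ Ideal.span ((fun u => monomial u (1:k)) '' G) ↔ ∃ u ∈ G, u ≤ w := by
  constructor
  · intro h
    exact exists_div_of_mem_span h (w := w) (by simp)
  · rintro ⟨u, hu, hle⟩
    have : (monomial w (1:k)) = monomial (w - u) 1 * monomial u 1 := by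
      rw [monomial_mul, one_mul, tsub_add_cancel_of_le hle]
    rw [this]
    exact Ideal.mul_mem_left _ _ (Ideal.subset_span ⟨u, hu, rfl⟩)

lemma monomial_mem_sup_iff {I : Ideal (MvPolynomial (Fin n) k)} {G : Set (Fin n →₀ ℕ)}
    (hG : I = Ideal.span ((fun u => monomial u (1:k)) '' G)) (ℓ : Fin n) (w : Fin n →₀ ℕ) :
    (monomial w (1:k)) ∈ I ⊔ Ideal.span {(X ℓ : MvPolynomial (Fin n) k)} ↔
      (monomial w (1:k)) ∈ I ∨ w ℓ ≠ 0 := by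
  have hX : ({(X ℓ : MvPolynomial (Fin n) k)} : Set _)
      = (fun u => monomial u (1:k)) '' {Finsupp.single ℓ 1} := by
    simp [X]
  rw [hG, hX, ← Ideal.span_union, ← Set.image_union, monomial_mem_span_iff,
    monomial_mem_span_iff]
  constructor
  · rintro ⟨u, hu | hu, hle⟩
    · exact Or.inl ⟨u, hu, hle⟩
    · right
      rw [Set.mem_singleton_iff] at hu
      subst hu
      rw [Finsupp.single_le_iff] at hle
      omega
  · rintro (⟨u, hu, hle⟩ | h)
    · exact ⟨u, Or.inl hu, hle⟩
    · exact ⟨Finsupp.single ℓ 1, Or.inr rfl, Finsupp.single_le_iff.2 (by omega)⟩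

lemma monomial_mem_colon_iff (I : Ideal (MvPolynomial (Fin n) k)) (ℓ : Fin n)
    (w : Fin n →₀ ℕ) :
    (monomial w (1:k)) ∈ Submodule.colon I (Ideal.span {(X ℓ : MvPolynomial (Fin n) k)}) ↔
      (monomial (w + Finsupp.single ℓ 1) (1:k)) ∈ I := by
  rw [Ideal.mem_colon_span_singleton]
  congr! 1
  rw [show (X ℓ : MvPolynomial (Fin n) k) = monomial (Finsupp.single ℓ 1) 1 from rfl,
    monomial_mul, one_mul]

lemma stanleyPairSet_add (e u : Fin n →₀ ℕ) (σ : Finset (Fin n)) :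
    stanleyPairSet (u + e) σ = (fun w => e + w) '' stanleyPairSet u σ := by
  ext w
  constructor
  · rintro ⟨v, hv, rfl⟩
    exact ⟨u + v, ⟨v, hv, rfl⟩, by show e + (u + v) = u + e + v; rw [← add_assoc, add_comm e u]⟩
  · rintro ⟨w', ⟨v, hv, rfl⟩, rfl⟩
    exact ⟨v, hv, by show e + (u + v) = u + e + v; rw [← add_assoc, add_comm e u]⟩

end helpers

/-- if `𝔄` is a Stanley decomposition of `S/(I + ⟨x_ℓ⟩)` and `𝔅` is a Stanley
decomposition of `S/(I : x_ℓ)`, then `𝔄 ∪ {(x_ℓ·x^v, σ) : (x^v, σ) ∈ 𝔅}` is a Stanley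
decomposition of `S/I`. -/

theorem stanley_decomposition_of_sum_and_colon {k : Type} [Field k] {n : ℕ}
    (I : Ideal (MvPolynomial (Fin n) k)) (hmon : IsMonomialIdeal I) (hproper : I ≠ ⊤)
    (ℓ : Fin n) (𝔄 𝔅 : Finset ((Fin n →₀ ℕ) × Finset (Fin n)))
    (hA : IsStanleyDecomp (I ⊔ Ideal.span {(X ℓ : MvPolynomial (Fin n) k)}) 𝔄)
    (hB : IsStanleyDecomp
      (Submodule.colon I (Ideal.span {(X ℓ : MvPolynomial (Fin n) k)})) 𝔅) :
    IsStanleyDecomp I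
      (𝔄 ∪ 𝔅.image (fun p => (p.1 + Finsupp.single ℓ 1, p.2))) := by
  obtain ⟨G, hG⟩ := hmon
  set e : Fin n →₀ ℕ := Finsupp.single ℓ 1 with he
  set f : (Fin n →₀ ℕ) × Finset (Fin n) → (Fin n →₀ ℕ) × Finset (Fin n) :=
    fun p => (p.1 + e, p.2) with hf
  have hfinj : Function.Injective f := by
    rintro ⟨u, σ⟩ ⟨u', σ'⟩ h
    simp only [hf, Prod.mk.injEq] at h
    exact Prod.ext (add_right_cancel h.1) h.2
  -- every element of an 𝔄-pair set has ℓ-coordinate 0 and its monomial is not in I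
  have hAmem : ∀ p ∈ 𝔄, ∀ w ∈ stanleyPairSet p.1 p.2,
      (monomial w (1:k)) ∉ I ∧ w ℓ = 0 := by
    intro p hp w hw
    have : w ∈ ⋃ q ∈ (𝔄 : Set ((Fin n →₀ ℕ) × Finset (Fin n))), stanleyPairSet q.1 q.2 :=
      Set.mem_biUnion hp hw
    rw [hA.2] at this
    have h2 := this
    rw [Set.mem_setOf_eq, monomial_mem_sup_iff hG] at h2
    push_neg at h2
    exact h2
  -- every element of a shifted 𝔅-pair set has ℓ-coordinate ≠ 0
  have hBpos : ∀ q : (Fin n →₀ ℕ) × Finset (Fin n), ∀ w ∈ stanleyPairSet (q.1 + e) q.2,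
      w ℓ ≠ 0 := by
    rintro q w ⟨v, hv, rfl⟩
    simp [he, Finsupp.add_apply, Finsupp.single_apply]
  constructor
  · -- disjointness
    intro p hp q hq hpq
    simp only [Finset.mem_union, Finset.mem_image] at hp hq
    rcases hp with hp | ⟨b, hb, rfl⟩
    · rcases hq with hq | ⟨b', hb', rfl⟩
      · exact hA.1 p hp q hq hpq
      · rw [Set.disjoint_left]
        intro w hwp hwq
        exact hBpos b' w hwq (hAmem p hp w hwp).2
    · rcases hq with hq | ⟨b', hb', rfl⟩
      · rw [Set.disjoint_right]
        intro w hwq hwp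
        exact hBpos b w hwp (hAmem q hq w hwq).2
      · have hbb' : b ≠ b' := fun h => hpq (by rw [h])
        have := hB.1 b hb b' hb' hbb'
        simp only [hf, stanleyPairSet_add]
        exact (Set.disjoint_image_iff (fun a a' h => add_left_cancel h)).2 this
  · -- union
    rw [Finset.coe_union, Set.biUnion_union, Finset.coe_image, Set.biUnion_image]
    have hBU : (⋃ q ∈ (𝔅 : Set ((Fin n →₀ ℕ) × Finset (Fin n))),
        stanleyPairSet (f q).1 (f q).2)
        = (fun w => e + w) '' {w | (monomial (w + e) (1:k)) ∉ I} := by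
      have : ∀ q : (Fin n →₀ ℕ) × Finset (Fin n),
          stanleyPairSet (f q).1 (f q).2 = (fun w => e + w) '' stanleyPairSet q.1 q.2 :=
        fun q => stanleyPairSet_add e q.1 q.2
      calc (⋃ q ∈ (𝔅 : Set ((Fin n →₀ ℕ) × Finset (Fin n))), stanleyPairSet (f q).1 (f q).2)
          = ⋃ q ∈ (𝔅 : Set ((Fin n →₀ ℕ) × Finset (Fin n))),
              (fun w => e + w) '' stanleyPairSet q.1 q.2 := by
            exact Set.iUnion₂_congr (fun q _ => this q)
        _ = (fun w => e + w) '' ⋃ q ∈ (𝔅 : Set ((Fin n →₀ ℕ) × Finset (Fin n))),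
              stanleyPairSet q.1 q.2 := by rw [Set.image_iUnion₂]
        _ = _ := by
            rw [hB.2]
            have hset : {w | (monomial w (1:k)) ∉
                Submodule.colon I (Ideal.span {(X ℓ : MvPolynomial (Fin n) k)})}
                = {w | (monomial (w + e) (1:k)) ∉ I} := by
              ext w
              simp only [Set.mem_setOf_eq, monomial_mem_colon_iff, ← he]
            rw [hset]
    rw [hA.2, hBU]
    ext w
    simp only [Set.mem_union, Set.mem_setOf_eq, Set.mem_image,
      monomial_mem_sup_iff hG]
    constructor
    · rintro (h | ⟨w', hw', rfl⟩)
      · push_neg at h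
        exact h.1
      · rwa [add_comm]
    · intro hw
      rcases eq_or_ne (w ℓ) 0 with h0 | h0
      · left
        push_neg
        exact ⟨hw, h0⟩
      · right
        refine ⟨w - e, ?_, ?_⟩
        · rwa [tsub_add_cancel_of_le (Finsupp.single_le_iff.2 (by omega))]
        · rw [add_comm, tsub_add_cancel_of_le (Finsupp.single_le_iff.2 (by omega))]
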